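/- Consider a group extension 0 → ⟨z⟩ → S → K → 0 with z of infinite order and K virtually cyclic. Let g ∈ S be such that 𝔭(g) ∈ K has infinite order. Then there exists an element g' ∈ 𝔭⁻¹(𝔭(⟨g⟩)) with g' ∉ ⟨z⟩ such that ⟨g'⟩ is a normal subgroup of S. -/

import Mathlib

private lemma conj_mul'' {G : Type*} [Group G] (s x y : G) :
    s * (x * y) * s⁻¹ = (s * x * s⁻¹) * (s * y * s⁻¹) := by group

private lemma conj_zpow'' {G : Type*} [Group G] (s x : G) (n : ℤ) :
    s * x ^ n * s⁻¹ = (s * x * s⁻¹) ^ n := by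
  simpa [MulAut.conj_apply] using (map_zpow (MulAut.conj s) x n)

/-- the sign function of the conjugation action on an infinite cyclic normal subgroup -/
private lemma aux_sign {S : Type*} [Group S] (z : S) (hz : ¬IsOfFinOrder z)
    (hn : (Subgroup.zpowers z).Normal) :
    ∃ e : S → ℤ, (∀ s, s * z * s⁻¹ = z ^ e s) ∧ (∀ s, e s = 1 ∨ e s = -1) ∧
      (∀ s t, e (s * t) = e s * e t) := by
  classical
  have hzi : Function.Injective fun n : ℤ => z ^ n :=
    injective_zpow_iff_not_isOfFinOrder.2 hz
  have hdata : ∀ s : S, ∃ m : ℤ, s * z * s⁻¹ = z ^ m ∧ (m = 1 ∨ m = -1) := by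
    intro s
    obtain ⟨m, hm⟩ := Subgroup.mem_zpowers_iff.1 (hn.conj_mem z (Subgroup.mem_zpowers z) s)
    obtain ⟨m', hm'⟩ := Subgroup.mem_zpowers_iff.1 (hn.conj_mem z (Subgroup.mem_zpowers z) s⁻¹)
    refine ⟨m, hm.symm, ?_⟩
    have h1 : z ^ (m' * m) = z ^ (1 : ℤ) := by
      rw [zpow_mul, hm', zpow_one]
      calc (s⁻¹ * z * s⁻¹⁻¹) ^ m = s⁻¹ * z ^ m * s⁻¹⁻¹ := (conj_zpow'' s⁻¹ z m).symm
        _ = s⁻¹ * (s * z * s⁻¹) * s⁻¹⁻¹ := by rw [hm]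
        _ = z := by group
    have hmm : m' * m = 1 := hzi h1
    rcases Int.isUnit_iff.1 (IsUnit.of_mul_eq_one (a := m) m' (by linarith)) with h | h
    · exact Or.inl h
    · exact Or.inr h
  set e : S → ℤ := fun s => if s * z * s⁻¹ = z then 1 else -1 with he
  have hkey : ∀ s, s * z * s⁻¹ = z ^ e s := by
    intro s
    obtain ⟨m, hm, hcase⟩ := hdata s
    show s * z * s⁻¹ = z ^ (if s * z * s⁻¹ = z then (1 : ℤ) else -1)
    rcases hcase with rfl | rfl
    · rw [zpow_one] at hm; rw [if_pos hm, zpow_one, hm]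
    · have hne : s * z * s⁻¹ ≠ z := by
        rw [hm]
        intro h
        have h2 : z ^ (-1 : ℤ) = z ^ (1 : ℤ) := by simpa using h
        have := hzi h2
        norm_num at this
      rw [if_neg hne]; exact hm
  have hsign : ∀ s, e s = 1 ∨ e s = -1 := by
    intro s
    by_cases h : s * z * s⁻¹ = z
    · left; simp [he, h]
    · right; simp [he, h]
  refine ⟨e, hkey, hsign, ?_⟩
  intro s t
  apply hzi
  show z ^ e (s * t) = z ^ (e s * e t)
  calc z ^ e (s * t) = (s * t) * z * (s * t)⁻¹ := (hkey (s * t)).symm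
    _ = s * (t * z * t⁻¹) * s⁻¹ := by group
    _ = s * z ^ e t * s⁻¹ := by rw [hkey t]
    _ = (s * z * s⁻¹) ^ e t := conj_zpow'' s z (e t)
    _ = (z ^ e s) ^ e t := by rw [hkey s]
    _ = z ^ (e s * e t) := by rw [← zpow_mul]
open Subgroup

open Subgroup in
theorem aux_virtCyclic {Q : Type*} [Group Q]
    (hK : ∃ H : Subgroup Q, H.FiniteIndex ∧ IsCyclic H)
    (q : Q) (hq : ¬IsOfFinOrder q) :
    ∃ T : ℕ, 0 < T ∧ (Subgroup.zpowers (q ^ T)).FiniteIndex := by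
  obtain ⟨H, hfi, hcyc⟩ := hK
  obtain ⟨T, hT0, -, hTmem⟩ := Subgroup.exists_pow_mem_of_index_ne_zero hfi.index_ne_zero q
  refine ⟨T, hT0, ?_⟩
  letI : CommGroup H := hcyc.commGroup
  set h₀ : H := ⟨q ^ T, hTmem⟩ with hh₀
  have hko : ¬IsOfFinOrder h₀ := by
    intro hfo
    exact hq ((H.subtype.isOfFinOrder hfo).of_pow hT0.ne')
  set J : Subgroup H := Subgroup.zpowers h₀ with hJ
  obtain ⟨c, hc⟩ := IsCyclic.exists_generator (α := H)
  obtain ⟨m, hm⟩ := Subgroup.mem_zpowers_iff.1 (hc h₀)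
  have hm0 : m ≠ 0 := by
    rintro rfl
    rw [zpow_zero] at hm
    exact hko (hm ▸ IsOfFinOrder.one)
  have hmkc : IsOfFinOrder (QuotientGroup.mk c : H ⧸ J) := by
    rw [isOfFinOrder_iff_pow_eq_one]
    refine ⟨m.natAbs, Int.natAbs_pos.2 hm0, ?_⟩
    have hz : (QuotientGroup.mk c : H ⧸ J) ^ m = 1 := by
      rw [← QuotientGroup.mk_zpow, hm, QuotientGroup.eq_one_iff]
      exact Subgroup.mem_zpowers h₀
    rw [← zpow_natCast]
    rcases Int.natAbs_eq m with h | h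
    · rw [← h, hz]
    · rw [← neg_neg (m.natAbs : ℤ), ← h, zpow_neg, hz, inv_one]
  have hfinq : Finite (H ⧸ J) := by
    rw [← Set.finite_univ_iff]
    refine Set.Finite.subset (finite_zpowers.2 hmkc) ?_
    rintro y -
    induction y using QuotientGroup.induction_on with
    | _ x =>
      obtain ⟨k, hk⟩ := Subgroup.mem_zpowers_iff.1 (hc x)
      exact Subgroup.mem_zpowers_iff.2 ⟨k, by rw [← QuotientGroup.mk_zpow, hk]⟩
  have hJind : J.index ≠ 0 := Subgroup.index_ne_zero_of_finite
  have hle : Subgroup.zpowers (q ^ T) ≤ H := by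
    rintro x hx
    obtain ⟨k, hk⟩ := Subgroup.mem_zpowers_iff.1 hx
    exact hk ▸ Subgroup.zpow_mem H hTmem k
  have hsub : (Subgroup.zpowers (q ^ T)).subgroupOf H = J := by
    ext x
    simp only [Subgroup.mem_subgroupOf, Subgroup.mem_zpowers_iff, hJ]
    constructor
    · rintro ⟨k, hk⟩
      exact ⟨k, Subtype.ext (by rw [← hk]; rfl)⟩
    · rintro ⟨k, hk⟩
      exact ⟨k, by rw [← hk]; rfl⟩
  have hrel : (Subgroup.zpowers (q ^ T)).relIndex H ≠ 0 := by
    rw [Subgroup.relIndex, hsub]; exact hJind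
  refine ⟨?_⟩
  rw [← Subgroup.relIndex_mul_index hle]
  exact Nat.mul_ne_zero hrel hfi.index_ne_zero

/-- In an extension `0 → ⟨z⟩ → S → K → 0` with `z` of infinite order and
`K` virtually cyclic, for every `g ∈ S` with `𝔭(g)` of infinite order there exists
`g' ∈ 𝔭⁻¹(𝔭(⟨g⟩))` with `g' ∉ ⟨z⟩` such that `⟨g'⟩` is normal in `S`. -/
theorem straightening_central_direction {S : Type*} [Group S] (z : S)
    (hz : ¬IsOfFinOrder z) [hn : (Subgroup.zpowers z).Normal]
    (hK : ∃ H : Subgroup (S ⧸ Subgroup.zpowers z), H.FiniteIndex ∧ IsCyclic H)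
    (g : S)
    (hg : ¬IsOfFinOrder (QuotientGroup.mk g : S ⧸ Subgroup.zpowers z)) :
    ∃ g' : S,
      (QuotientGroup.mk g' : S ⧸ Subgroup.zpowers z) ∈
        Subgroup.zpowers (QuotientGroup.mk g : S ⧸ Subgroup.zpowers z) ∧
      g' ∉ Subgroup.zpowers z ∧
      (Subgroup.zpowers g').Normal := by
  classical
  have hzi : Function.Injective fun n : ℤ => z ^ n :=
    injective_zpow_iff_not_isOfFinOrder.2 hz
  set Z := Subgroup.zpowers z with hZdef
  set q : S ⧸ Z := QuotientGroup.mk g with hqdef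
  have hqi : Function.Injective fun n : ℤ => q ^ n :=
    injective_zpow_iff_not_isOfFinOrder.2 hg
  obtain ⟨e, ekey, esign, emul⟩ := aux_sign z hz hn
  have e_sq : ∀ s : S, e s * e s = 1 := by
    intro s; rcases esign s with h | h <;> rw [h] <;> norm_num
  obtain ⟨T, hT0, hTfi⟩ := aux_virtCyclic hK q hg
  set H' : Subgroup S := (Subgroup.zpowers (q ^ T)).comap (QuotientGroup.mk' Z) with hH'def
  have hH'fi : H'.FiniteIndex := by
    constructor
    rw [Subgroup.index_comap_of_surjective _ (QuotientGroup.mk'_surjective Z)]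
    exact hTfi.index_ne_zero
  haveI := hH'fi
  set N : Subgroup S := H'.normalCore with hNdef
  haveI hNn : N.Normal := H'.normalCore_normal
  haveI hNfi : N.FiniteIndex := Subgroup.finiteIndex_normalCore H'
  set E : S →* ℤˣ := MonoidHom.mk' (fun s => ⟨e s, e s, e_sq s, e_sq s⟩)
    (fun s t => by ext; exact emul s t) with hEdef
  set M : Subgroup S := N ⊓ E.ker with hMdef
  haveI hMn : M.Normal := Subgroup.normal_inf_normal N E.ker
  haveI hMfi : M.FiniteIndex := inferInstance
  have hMz : ∀ x ∈ M, x * z * x⁻¹ = z := by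
    intro x hx
    have h1 : E x = 1 := hx.2
    have h2 : e x = 1 := congrArg Units.val h1
    rw [ekey x, h2, zpow_one]
  have hpowM : ∀ y : S, ∃ R : ℕ, 0 < R ∧ y ^ R ∈ M := by
    intro y
    obtain ⟨R, h1, -, h3⟩ := Subgroup.exists_pow_mem_of_index_ne_zero hMfi.index_ne_zero y
    exact ⟨R, h1, h3⟩
  have hH'mem : ∀ x ∈ H', ∃ b : ℤ, (QuotientGroup.mk x : S ⧸ Z) = q ^ b := by
    intro x hx
    obtain ⟨k, hk⟩ := Subgroup.mem_zpowers_iff.1 hx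
    refine ⟨(T : ℤ) * k, ?_⟩
    have h : (QuotientGroup.mk x : S ⧸ Z) = (q ^ (T : ℕ)) ^ k := hk.symm
    rw [h, ← zpow_natCast q T, ← zpow_mul]
  have hMle : M ≤ H' := le_trans inf_le_left H'.normalCore_le
  set A : AddSubgroup ℤ :=
    { carrier := {b : ℤ | ∃ x ∈ M, (QuotientGroup.mk x : S ⧸ Z) = q ^ b}
      zero_mem' := ⟨1, M.one_mem, by simp⟩
      add_mem' := by
        rintro b b' ⟨x, hx, hb⟩ ⟨y, hy, hb'⟩
        exact ⟨x * y, M.mul_mem hx hy, by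
          rw [QuotientGroup.mk_mul, hb, hb', ← zpow_add]⟩
      neg_mem' := by
        rintro b ⟨x, hx, hb⟩
        exact ⟨x⁻¹, M.inv_mem hx, by rw [QuotientGroup.mk_inv, hb, ← zpow_neg]⟩ } with hAdef
  obtain ⟨t₀, ht₀⟩ := Int.subgroup_cyclic A
  have hmemA : ∀ b : ℤ, b ∈ A ↔ ∃ k : ℤ, b = k * t₀ := by
    intro b
    rw [ht₀, AddSubgroup.mem_closure_singleton]
    constructor
    · rintro ⟨k, hk⟩; exact ⟨k, by rw [← hk, smul_eq_mul]⟩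
    · rintro ⟨k, hk⟩; exact ⟨k, by rw [smul_eq_mul, hk]⟩
  have ht₀ne : t₀ ≠ 0 := by
    obtain ⟨R, hR0, hRM⟩ := hpowM g
    have hRA : (R : ℤ) ∈ A := ⟨g ^ R, hRM, by
      rw [← zpow_natCast g R, QuotientGroup.mk_zpow]⟩
    obtain ⟨k, hk⟩ := (hmemA _).1 hRA
    rintro rfl
    simp at hk
    omega
  have ht₀A : t₀ ∈ A := by rw [hmemA]; exact ⟨1, (one_mul t₀).symm⟩
  obtain ⟨w₀, hw₀M, hw₀⟩ := ht₀A
  have hzw : Commute z w₀ := by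
    have h := hMz w₀ hw₀M
    show z * w₀ = w₀ * z
    calc z * w₀ = (w₀ * z * w₀⁻¹) * w₀ := by rw [h]
      _ = w₀ * z := by group
  have hexp : ∀ α β γ : ℤ, (z ^ α * w₀ ^ β) ^ γ = z ^ (α * γ) * w₀ ^ (β * γ) := by
    intro α β γ
    rw [(hzw.zpow_zpow α β).mul_zpow, ← zpow_mul, ← zpow_mul]
  have hmul2 : ∀ α β α' β' : ℤ,
      (z ^ α * w₀ ^ β) * (z ^ α' * w₀ ^ β') = z ^ (α + α') * w₀ ^ (β + β') := by
    intro α β α' β'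
    have hsw : w₀ ^ β * z ^ α' = z ^ α' * w₀ ^ β := ((hzw.zpow_zpow α' β).symm).eq
    calc (z ^ α * w₀ ^ β) * (z ^ α' * w₀ ^ β')
        = z ^ α * (w₀ ^ β * z ^ α') * w₀ ^ β' := by group
      _ = z ^ α * (z ^ α' * w₀ ^ β) * w₀ ^ β' := by rw [hsw]
      _ = (z ^ α * z ^ α') * (w₀ ^ β * w₀ ^ β') := by group
      _ = z ^ (α + α') * w₀ ^ (β + β') := by rw [← zpow_add, ← zpow_add]
  have hmkz : (QuotientGroup.mk z : S ⧸ Z) = 1 :=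
    (QuotientGroup.eq_one_iff z).2 (Subgroup.mem_zpowers z)
  have hmkzw : ∀ j k : ℤ, (QuotientGroup.mk (z ^ j * w₀ ^ k) : S ⧸ Z) = q ^ (t₀ * k) := by
    intro j k
    rw [QuotientGroup.mk_mul, QuotientGroup.mk_zpow, QuotientGroup.mk_zpow, hmkz, hw₀,
      one_zpow, one_mul, ← zpow_mul]
  have huniq : ∀ j k j' k' : ℤ, z ^ j * w₀ ^ k = z ^ j' * w₀ ^ k' → j = j' ∧ k = k' := by
    intro j k j' k' h
    have h1 : q ^ (t₀ * k) = q ^ (t₀ * k') := by rw [← hmkzw j k, ← hmkzw j' k', h]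
    have hk : k = k' := by
      have h2 := hqi h1
      exact mul_left_cancel₀ ht₀ne h2
    subst hk
    have h3 : z ^ j = z ^ j' := mul_right_cancel h
    exact ⟨hzi h3, rfl⟩
  have hrep : ∀ x ∈ M, ∃ j k : ℤ, x = z ^ j * w₀ ^ k := by
    intro x hx
    obtain ⟨b, hb⟩ := hH'mem x (hMle hx)
    obtain ⟨k, hk⟩ := (hmemA b).1 ⟨x, hx, hb⟩
    have h1 : (QuotientGroup.mk (x * (w₀ ^ k)⁻¹) : S ⧸ Z) = 1 := by
      rw [QuotientGroup.mk_mul, QuotientGroup.mk_inv, QuotientGroup.mk_zpow, hb, hw₀,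
        ← zpow_mul, hk, mul_comm t₀ k]
      simp
    obtain ⟨j, hj⟩ := Subgroup.mem_zpowers_iff.1 ((QuotientGroup.eq_one_iff _).1 h1)
    refine ⟨j, k, ?_⟩
    rw [hj]
    group
  have hMw : ∀ x ∈ M, x * w₀ * x⁻¹ = w₀ := by
    intro x hx
    obtain ⟨j, k, rfl⟩ := hrep x hx
    have hcomm : Commute (z ^ j * w₀ ^ k) w₀ :=
      Commute.mul_left (hzw.zpow_left j) ((Commute.refl w₀).zpow_left k)
    rw [hcomm.eq]
    group
  have hact : ∀ s : S, ∃ a k : ℤ, s * w₀ * s⁻¹ = z ^ a * w₀ ^ k ∧ (k = 1 ∨ k = -1) := by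
    intro s
    obtain ⟨a, k, h1⟩ := hrep _ (hMn.conj_mem w₀ hw₀M s)
    obtain ⟨a', k', h2⟩ := hrep _ (hMn.conj_mem w₀ hw₀M s⁻¹)
    refine ⟨a, k, h1, ?_⟩
    have h3 : z ^ (0:ℤ) * w₀ ^ (1:ℤ) = s⁻¹ * (z ^ a * w₀ ^ k) * s⁻¹⁻¹ := by
      rw [← h1]; group
    rw [conj_mul'', conj_zpow'', conj_zpow'', ekey s⁻¹, h2, ← zpow_mul, hexp,
      ← mul_assoc, ← zpow_add] at h3
    have h4 := (huniq _ _ _ _ h3).2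
    rcases Int.isUnit_iff.1 (IsUnit.of_mul_eq_one (a := k) k' (by
      have : k' * k = 1 := h4.symm
      linarith)) with h | h
    · exact Or.inl h
    · exact Or.inr h
  choose a f haf hf using hact
  have hcomp : ∀ s t : S, a (s * t) = e s * a t + a s * f t ∧ f (s * t) = f s * f t := by
    intro s t
    have h1 : (s * t) * w₀ * (s * t)⁻¹ = z ^ (e s * a t + a s * f t) * w₀ ^ (f s * f t) := by
      calc (s * t) * w₀ * (s * t)⁻¹ = s * (t * w₀ * t⁻¹) * s⁻¹ := by group
        _ = s * (z ^ a t * w₀ ^ f t) * s⁻¹ := by rw [haf t]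
        _ = (s * z * s⁻¹) ^ a t * (s * w₀ * s⁻¹) ^ f t := by
            rw [conj_mul'', conj_zpow'', conj_zpow'']
        _ = (z ^ e s) ^ a t * (z ^ a s * w₀ ^ f s) ^ f t := by rw [ekey s, haf s]
        _ = z ^ (e s * a t + a s * f t) * w₀ ^ (f s * f t) := by
            rw [← zpow_mul, hexp, ← mul_assoc, ← zpow_add]
    have h2 := (haf (s * t)).symm.trans h1
    obtain ⟨ha, hb⟩ := huniq _ _ _ _ h2
    exact ⟨ha, hb⟩
  have claimA : ∀ s : S, f s = e s → a s = 0 := by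
    intro s hfe
    set u := s * s with hu
    have heu : e u = 1 := by rw [hu, emul]; exact e_sq s
    have hfu : f u = 1 := by rw [hu, (hcomp s s).2, hfe]; exact e_sq s
    have hau : a u = e s * a s + a s * e s := by rw [hu, (hcomp s s).1, hfe]
    have hind : ∀ R : ℕ, u ^ R * w₀ * (u ^ R)⁻¹ = z ^ ((R : ℤ) * a u) * w₀ ^ (1:ℤ) := by
      intro R
      induction R with
      | zero => simp
      | succ n ih =>
        calc u ^ (n + 1) * w₀ * (u ^ (n + 1))⁻¹
            = u * (u ^ n * w₀ * (u ^ n)⁻¹) * u⁻¹ := by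
              rw [pow_succ']; group
          _ = u * (z ^ ((n:ℤ) * a u) * w₀ ^ (1:ℤ)) * u⁻¹ := by rw [ih]
          _ = (u * z * u⁻¹) ^ ((n:ℤ) * a u) * (u * w₀ * u⁻¹) ^ (1:ℤ) := by
              rw [conj_mul'', conj_zpow'', conj_zpow'']
          _ = (z ^ e u) ^ ((n:ℤ) * a u) * (z ^ a u * w₀ ^ f u) ^ (1:ℤ) := by
              rw [ekey u, haf u]
          _ = z ^ (((n:ℤ) + 1) * a u) * w₀ ^ (1:ℤ) := by
              rw [heu, hfu, zpow_one z, zpow_one (z ^ a u * w₀ ^ (1:ℤ)), ← mul_assoc, ← zpow_add]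
              ring_nf
    obtain ⟨R, hR0, hRM⟩ := hpowM u
    have h5 : u ^ R * w₀ * (u ^ R)⁻¹ = z ^ (0:ℤ) * w₀ ^ (1:ℤ) := by
      rw [hMw (u ^ R) hRM]; simp
    have h6 := (huniq _ _ _ _ ((hind R).symm.trans h5)).1
    have h7 : a u = 0 := by
      rcases mul_eq_zero.1 h6 with h | h
      · exfalso; omega
      · exact h
    rcases esign s with h | h <;> rw [h] at hau <;> omega
  have hneg : ∀ r : S, f r ≠ e r → f r = -e r := by
    intro r hr
    rcases esign r with h | h <;> rcases hf r with h' | h' <;> rw [h, h'] at hr ⊢ <;> omega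
  have claimB : ∀ s t : S, f s ≠ e s → f t ≠ e t → e s * a s = e t * a t := by
    intro s t hs ht
    have hst : f (s * t) = e (s * t) := by
      rw [(hcomp s t).2, emul, hneg s hs, hneg t ht]; ring
    have h0 := claimA _ hst
    rw [(hcomp s t).1, hneg t ht] at h0
    rcases esign s with h | h <;> rcases esign t with h' | h' <;>
      rw [h, h'] at h0 ⊢ <;> omega
  have hcc : ∃ c : ℤ, ∀ s : S, f s ≠ e s → c = -(e s * a s) := by
    by_cases hex : ∃ s : S, f s ≠ e s
    · obtain ⟨s₀, hs₀⟩ := hex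
      exact ⟨-(e s₀ * a s₀), fun s hs => by rw [claimB s₀ s hs₀ hs]⟩
    · exact ⟨0, fun s hs => absurd ⟨s, hs⟩ hex⟩
  obtain ⟨c, hc⟩ := hcc
  refine ⟨z ^ c * w₀ ^ (2:ℤ), ?_, ?_, ?_⟩
  · exact Subgroup.mem_zpowers_iff.2 ⟨t₀ * 2, (hmkzw c 2).symm⟩
  · intro hmem
    have h1 : (QuotientGroup.mk (z ^ c * w₀ ^ (2:ℤ)) : S ⧸ Z) = 1 :=
      (QuotientGroup.eq_one_iff _).2 hmem
    rw [hmkzw c 2] at h1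
    have h2 : q ^ (t₀ * 2) = q ^ (0:ℤ) := by rw [h1, zpow_zero]
    have := hqi h2
    omega
  · have hconj : ∀ s : S, s * (z ^ c * w₀ ^ (2:ℤ)) * s⁻¹ = z ^ c * w₀ ^ (2:ℤ) ∨
        s * (z ^ c * w₀ ^ (2:ℤ)) * s⁻¹ = (z ^ c * w₀ ^ (2:ℤ))⁻¹ := by
      intro s
      have hexpand : s * (z ^ c * w₀ ^ (2:ℤ)) * s⁻¹
          = z ^ (e s * c + a s * 2) * w₀ ^ (f s * 2) := by
        rw [conj_mul'', conj_zpow'', conj_zpow'', ekey s, haf s, ← zpow_mul, hexp,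
          ← mul_assoc, ← zpow_add]
      have hinv : (z ^ c * w₀ ^ (2:ℤ))⁻¹ = z ^ (-c) * w₀ ^ (-2:ℤ) := by
        refine inv_eq_of_mul_eq_one_right ?_
        rw [hmul2]
        norm_num
      by_cases hfe : f s = e s
      · have ha0 := claimA s hfe
        rcases esign s with h | h
        · left; rw [hexpand, ha0, hfe, h]; norm_num
        · right; rw [hexpand, ha0, hfe, h, hinv]; norm_num
      · have hcs := hc s hfe
        have hfs : f s = -e s := hneg s hfe
        rcases esign s with h | h
        · right
          rw [hexpand, hinv, hfs, h]
          rw [h] at hcs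
          rw [hcs]
          norm_num
          exact congrArg (fun n : ℤ => z ^ n) (by ring)
        · left
          rw [hexpand, hfs, h]
          rw [h] at hcs
          rw [hcs]
          norm_num
          exact congrArg (fun n : ℤ => z ^ n) (by ring)
    constructor
    intro x hx s
    obtain ⟨k, hk⟩ := Subgroup.mem_zpowers_iff.1 hx
    rw [← hk, conj_zpow'']
    rcases hconj s with h | h <;> rw [h]
    · exact Subgroup.zpow_mem _ (Subgroup.mem_zpowers _) k
    · rw [inv_zpow]
      exact Subgroup.inv_mem _ (Subgroup.zpow_mem _ (Subgroup.mem_zpowers _) k)
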